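/- arXiv:1409.6941 — 2 statements merged into one kernel-verified Lean document; each statement's English description precedes it below -/
import Mathlib

section
/- Let (X_τ)_{τ∈ℤ} be a two-sided stationary Markov chain on {1,…,d} with transition matrix P₀ and marginal law π₀, assumed in the form: for all σ ∈ ℤ, n ≥ 0 and functions f,g : {1,…,d} → ℝ, E[f(X_σ) g(X_{σ+n})] = Σ_x π₀(x) f(x) (P₀ⁿ g)(x). Let ℰ be a d×d real matrix and ε_k(x) = ℰ(x,k). Fix ρ ∈ (0,1), σ_ζ² > 0, an integer m ≥ 1, and θ ∈ ℝ, and set ϱ = ρᵐ e^{−iθ}. Then for all k, l ∈ {1,…,d}, the two-sided series S^{kl}(θ) := Σ_{τ∈ℤ} E[ε_k(X_0) ε_l(X_τ)] · σ_ζ² ρ^{m|τ|} e^{−iτθ} converges absolutely, and S^{kl}(θ) = σ_ζ² ( ⟨ε_k, U_ϱ ε_l⟩ + ⟨ε_l, U_ϱ ε_k⟩* − ⟨ε_k, ε_l⟩ ), where * denotes complex conjugation. -/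
open MeasureTheory Matrix

/-- The bilinear pairing `⟨f,g⟩ = Σ_x π₀(x) f(x) g(x)`, extended bilinearly (without
conjugation) to complex-valued functions. -/
noncomputable def pairing (d : ℕ) (π₀ : Fin d → ℝ) (f g : Fin d → ℂ) : ℂ :=
  ∑ x, (π₀ x : ℂ) * f x * g x

/-- The resolvent `U_ϱ = Σ_{n=0}^∞ ϱⁿ P₀ⁿ` applied to a function `g`. -/
noncomputable def resolventApply (d : ℕ) (P₀ : Matrix (Fin d) (Fin d) ℝ) (ϱ : ℂ)
    (g : Fin d → ℂ) : Fin d → ℂ :=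
  fun x => ∑' n : ℕ, ϱ ^ n * ∑ y, ((P₀ ^ n) x y : ℂ) * g y


lemma pow_row_stochastic {d : ℕ} {P : Matrix (Fin d) (Fin d) ℝ}
    (h0 : ∀ x y, 0 ≤ P x y) (h1 : ∀ x, ∑ y, P x y = 1) (n : ℕ) :
    (∀ x y, 0 ≤ (P ^ n) x y) ∧ (∀ x, ∑ y, (P ^ n) x y = 1) := by
  induction n with
  | zero =>
    constructor
    · intro x y; simp [Matrix.one_apply]; positivity
    · intro x; simp [Matrix.one_apply]
  | succ n ih =>
    constructor
    · intro x y
      rw [pow_succ, Matrix.mul_apply]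
      exact Finset.sum_nonneg fun j _ => mul_nonneg (ih.1 x j) (h0 j y)
    · intro x
      simp only [pow_succ, Matrix.mul_apply]
      rw [Finset.sum_comm]
      calc ∑ j, ∑ y, (P ^ n) x j * P j y = ∑ j, (P ^ n) x j * ∑ y, P j y := by
            simp [Finset.mul_sum]
        _ = 1 := by simp [h1, ih.2 x]

lemma pow_entry_le_one {d : ℕ} {P : Matrix (Fin d) (Fin d) ℝ}
    (h0 : ∀ x y, 0 ≤ P x y) (h1 : ∀ x, ∑ y, P x y = 1) (n : ℕ) (x y : Fin d) :
    |(P ^ n) x y| ≤ 1 := by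
  obtain ⟨hn, hs⟩ := pow_row_stochastic h0 h1 n
  rw [abs_of_nonneg (hn x y), ← hs x]
  exact Finset.single_le_sum (fun j _ => hn x j) (Finset.mem_univ y)

lemma hasSum_pairing_resolvent {d : ℕ} {P₀ : Matrix (Fin d) (Fin d) ℝ}
    (hP : ∀ (n : ℕ) (x y : Fin d), |(P₀ ^ n) x y| ≤ 1) {ϱ : ℂ} (hϱ : ‖ϱ‖ < 1)
    (π₀ : Fin d → ℝ) (f g : Fin d → ℂ) :
    HasSum (fun n : ℕ => ϱ ^ n * ∑ x, (π₀ x : ℂ) * f x * ∑ y, ((P₀ ^ n) x y : ℂ) * g y)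
      (pairing d π₀ f (resolventApply d P₀ ϱ g)) := by
  have hsx : ∀ x : Fin d, Summable (fun n : ℕ => ϱ ^ n * ∑ y, ((P₀ ^ n) x y : ℂ) * g y) := by
    intro x
    apply Summable.of_norm_bounded (g := fun n : ℕ => ‖ϱ‖ ^ n * ∑ y, ‖g y‖)
      ((summable_geometric_of_lt_one (norm_nonneg _) hϱ).mul_right _)
    intro n
    rw [norm_mul, norm_pow]
    gcongr
    calc ‖∑ y, ((P₀ ^ n) x y : ℂ) * g y‖ ≤ ∑ y, ‖((P₀ ^ n) x y : ℂ) * g y‖ := norm_sum_le _ _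
      _ ≤ ∑ y, ‖g y‖ := by
        apply Finset.sum_le_sum
        intro y _
        rw [norm_mul, Complex.norm_real, Real.norm_eq_abs]
        calc |(P₀ ^ n) x y| * ‖g y‖ ≤ 1 * ‖g y‖ := by
              apply mul_le_mul_of_nonneg_right (hP n x y) (norm_nonneg _)
          _ = ‖g y‖ := one_mul _
  have h1 : ∀ x : Fin d, HasSum
      (fun n : ℕ => (π₀ x : ℂ) * f x * (ϱ ^ n * ∑ y, ((P₀ ^ n) x y : ℂ) * g y))
      ((π₀ x : ℂ) * f x * resolventApply d P₀ ϱ g x) :=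
    fun x => ((hsx x).hasSum).mul_left _
  have h2 := hasSum_sum (f := fun (x : Fin d) (n : ℕ) =>
    (π₀ x : ℂ) * f x * (ϱ ^ n * ∑ y, ((P₀ ^ n) x y : ℂ) * g y))
    (s := Finset.univ) (fun x _ => h1 x)
  convert h2 using 1
  · funext n
    rw [Finset.mul_sum]
    exact Finset.sum_congr rfl fun x _ => by ring
  · rfl

set_option linter.unusedSectionVars false in
set_option linter.unusedVariables false in
/-- **Proposition 2.**  For the stationary chain `(X_τ)` and input autocorrelation
`R_ζ(n) = σ_ζ² ρⁿ`, subsampled by the super-sampling factor `m`, the two-sided series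
`S^{kl}(θ) = Σ_τ E[ε_k(X_0) ε_l(X_τ)] σ_ζ² ρ^{m|τ|} e^{−iτθ}` converges absolutely and equals
`σ_ζ² (⟨ε_k, U_ϱ ε_l⟩ + ⟨ε_l, U_ϱ ε_k⟩* − ⟨ε_k, ε_l⟩)` with `ϱ = ρᵐ e^{−iθ}`. -/
theorem stmt4 {Ω : Type*} {mΩ : MeasurableSpace Ω} (μ : Measure Ω) [IsProbabilityMeasure μ]
    (d : ℕ) (P₀ : Matrix (Fin d) (Fin d) ℝ) (π₀ : Fin d → ℝ)
    (hPnonneg : ∀ x x', 0 ≤ P₀ x x') (hProw : ∀ x, ∑ x', P₀ x x' = 1)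
    (hπnonneg : ∀ x, 0 ≤ π₀ x) (hπsum : ∑ x, π₀ x = 1)
    (hπinv : ∀ x', ∑ x, π₀ x * P₀ x x' = π₀ x')
    (X : ℤ → Ω → Fin d) (hXmeas : ∀ τ, Measurable (X τ))
    (hstat : ∀ (σ : ℤ) (n : ℕ) (f g : Fin d → ℝ),
      ∫ ω, f (X σ ω) * g (X (σ + n) ω) ∂μ = ∑ x, π₀ x * f x * (P₀ ^ n).mulVec g x)
    (ℰ : Matrix (Fin d) (Fin d) ℝ)
    (ρ : ℝ) (hρ : ρ ∈ Set.Ioo (0:ℝ) 1) (σζsq : ℝ) (hσζ : 0 < σζsq)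
    (m : ℕ) (hm : 1 ≤ m) (θ : ℝ)
    (ϱ : ℂ) (hϱ : ϱ = (ρ : ℂ) ^ m * Complex.exp (-(θ : ℂ) * Complex.I)) :
    ∀ k l : Fin d,
      Summable (fun τ : ℤ =>
        ‖((∫ ω, ℰ (X 0 ω) k * ℰ (X τ ω) l ∂μ : ℝ) : ℂ) * (σζsq : ℂ) *
          (ρ : ℂ) ^ (m * τ.natAbs) * Complex.exp (-(τ : ℂ) * (θ : ℂ) * Complex.I)‖) ∧
      ∑' τ : ℤ, ((∫ ω, ℰ (X 0 ω) k * ℰ (X τ ω) l ∂μ : ℝ) : ℂ) * (σζsq : ℂ) *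
          (ρ : ℂ) ^ (m * τ.natAbs) * Complex.exp (-(τ : ℂ) * (θ : ℂ) * Complex.I) =
        (σζsq : ℂ) *
          (pairing d π₀ (fun x => (ℰ x k : ℂ))
              (resolventApply d P₀ ϱ (fun x => (ℰ x l : ℂ))) +
            star (pairing d π₀ (fun x => (ℰ x l : ℂ))
              (resolventApply d P₀ ϱ (fun x => (ℰ x k : ℂ)))) -
            pairing d π₀ (fun x => (ℰ x k : ℂ)) (fun x => (ℰ x l : ℂ))) := by
  intro k l
  obtain ⟨hρ0, hρ1⟩ := hρ
  have hPabs : ∀ (n : ℕ) (x y : Fin d), |(P₀ ^ n) x y| ≤ 1 :=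
    pow_entry_le_one hPnonneg hProw
  have hϱnorm : ‖ϱ‖ < 1 := by
    rw [hϱ, norm_mul, norm_pow, Complex.norm_real, Real.norm_eq_abs, abs_of_pos hρ0]
    have h1 : ‖Complex.exp (-(θ:ℂ) * Complex.I)‖ = 1 := by
      rw [Complex.norm_exp]
      simp
    rw [h1, mul_one]
    exact pow_lt_one₀ hρ0.le hρ1 (by omega)
  set Gr : ℕ → ℝ := fun n => ∑ x, π₀ x * ℰ x k * (P₀ ^ n).mulVec (fun y => ℰ y l) x with hGrdef
  set Hr : ℕ → ℝ := fun n => ∑ x, π₀ x * ℰ x l * (P₀ ^ n).mulVec (fun y => ℰ y k) x with hHrdef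
  have hG : ∀ n : ℕ, (∫ ω, ℰ (X 0 ω) k * ℰ (X (n:ℤ) ω) l ∂μ) = Gr n := by
    intro n
    have h := hstat 0 n (fun x => ℰ x k) (fun x => ℰ x l)
    simpa using h
  have hH : ∀ n : ℕ, (∫ ω, ℰ (X 0 ω) k * ℰ (X (-(n:ℤ)) ω) l ∂μ) = Hr n := by
    intro n
    have h := hstat (-(n:ℤ)) n (fun x => ℰ x l) (fun x => ℰ x k)
    simp only [neg_add_cancel] at h
    simp only [hHrdef]
    rw [← h]
    have heq : (fun ω => ℰ (X 0 ω) k * ℰ (X (-(n:ℤ)) ω) l)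
        = fun ω => ℰ (X (-(n:ℤ)) ω) l * ℰ (X 0 ω) k := by funext ω; ring
    rw [heq]
  have HSk : HasSum (fun n : ℕ => ϱ ^ n * ((Gr n : ℝ) : ℂ))
      (pairing d π₀ (fun x => (ℰ x k : ℂ)) (resolventApply d P₀ ϱ (fun x => (ℰ x l : ℂ)))) := by
    have h := hasSum_pairing_resolvent hPabs hϱnorm π₀
      (fun x => ((ℰ x k : ℝ) : ℂ)) (fun x => ((ℰ x l : ℝ) : ℂ))
    convert h using 1
    funext n
    congr 1
    rw [hGrdef]
    push_cast [Matrix.mulVec, dotProduct]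
    rfl
  have HSl : HasSum (fun n : ℕ => ϱ ^ n * ((Hr n : ℝ) : ℂ))
      (pairing d π₀ (fun x => (ℰ x l : ℂ)) (resolventApply d P₀ ϱ (fun x => (ℰ x k : ℂ)))) := by
    have h := hasSum_pairing_resolvent hPabs hϱnorm π₀
      (fun x => ((ℰ x l : ℝ) : ℂ)) (fun x => ((ℰ x k : ℝ) : ℂ))
    convert h using 1
    funext n
    congr 1
    rw [hHrdef]
    push_cast [Matrix.mulVec, dotProduct]
    rfl
  have HSl' : HasSum (fun n : ℕ => ϱ ^ (n + 1) * ((Hr (n + 1) : ℝ) : ℂ))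
      ((pairing d π₀ (fun x => (ℰ x l : ℂ)) (resolventApply d P₀ ϱ (fun x => (ℰ x k : ℂ))))
        - ((Hr 0 : ℝ) : ℂ)) := by
    refine (hasSum_nat_add_iff (f := fun n : ℕ => ϱ ^ n * ((Hr n : ℝ) : ℂ)) 1).mpr ?_
    simpa using HSl
  have hstarϱ : star ϱ = (ρ : ℂ) ^ m * Complex.exp ((θ : ℂ) * Complex.I) := by
    have h2 : (starRingEnd ℂ) (-(θ:ℂ) * Complex.I) = (θ:ℂ) * Complex.I := by
      simp
    rw [hϱ, star_mul', star_pow, Complex.star_def, Complex.conj_ofReal,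
      ← Complex.exp_conj, h2]
  have eqpos : ∀ n : ℕ,
      ((∫ ω, ℰ (X 0 ω) k * ℰ (X ((n:ℕ):ℤ) ω) l ∂μ : ℝ) : ℂ) * (σζsq : ℂ) *
          (ρ : ℂ) ^ (m * ((n:ℕ):ℤ).natAbs) *
          Complex.exp (-(((n:ℕ):ℤ) : ℂ) * (θ : ℂ) * Complex.I)
        = (σζsq : ℂ) * (ϱ ^ n * ((Gr n : ℝ) : ℂ)) := by
    intro n
    rw [hG n, hϱ, mul_pow, ← pow_mul, ← Complex.exp_nat_mul]
    have harg : (n : ℂ) * (-(θ:ℂ) * Complex.I) = -(((n:ℤ) : ℂ)) * (θ:ℂ) * Complex.I := by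
      push_cast; ring
    rw [harg]
    simp only [Int.natAbs_natCast]
    ring
  have eqneg : ∀ n : ℕ,
      ((∫ ω, ℰ (X 0 ω) k * ℰ (X (-((n:ℤ)+1)) ω) l ∂μ : ℝ) : ℂ) * (σζsq : ℂ) *
          (ρ : ℂ) ^ (m * (-((n:ℤ)+1)).natAbs) *
          Complex.exp (-(Int.cast (-((n:ℤ)+1)) : ℂ) * (θ : ℂ) * Complex.I)
        = (σζsq : ℂ) * star (ϱ ^ (n + 1) * ((Hr (n + 1) : ℝ) : ℂ)) := by
    intro n
    have hτ : (-((n:ℤ)+1)) = -(((n+1 : ℕ)):ℤ) := by push_cast; ring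
    rw [hτ, hH (n + 1)]
    rw [star_mul', star_pow, hstarϱ, Complex.star_def, Complex.conj_ofReal,
      mul_pow, ← pow_mul, ← Complex.exp_nat_mul]
    have hna : (-(((n+1:ℕ)):ℤ)).natAbs = n + 1 := by omega
    rw [hna]
    have harg : -(Int.cast (-(((n+1:ℕ)):ℤ)) : ℂ) * (θ:ℂ) * Complex.I
        = ((n+1 : ℕ) : ℂ) * ((θ:ℂ) * Complex.I) := by push_cast; ring
    rw [harg]
    ring
  have HF : HasSum (fun τ : ℤ =>
        ((∫ ω, ℰ (X 0 ω) k * ℰ (X τ ω) l ∂μ : ℝ) : ℂ) * (σζsq : ℂ) *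
          (ρ : ℂ) ^ (m * τ.natAbs) * Complex.exp (-(τ : ℂ) * (θ : ℂ) * Complex.I))
      ((σζsq : ℂ) * (pairing d π₀ (fun x => (ℰ x k : ℂ))
          (resolventApply d P₀ ϱ (fun x => (ℰ x l : ℂ)))) +
        (σζsq : ℂ) * star ((pairing d π₀ (fun x => (ℰ x l : ℂ))
          (resolventApply d P₀ ϱ (fun x => (ℰ x k : ℂ)))) - ((Hr 0 : ℝ) : ℂ))) := by
    apply HasSum.of_nat_of_neg_add_one
    · have h := HSk.mul_left (σζsq : ℂ)
      convert h using 1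
      · rfl
      funext n
      exact eqpos n
    · have h := (HSl'.star).mul_left (σζsq : ℂ)
      convert h using 1
      · rfl
      funext n
      exact eqneg n
  have hH0 : ((Hr 0 : ℝ) : ℂ) = pairing d π₀ (fun x => (ℰ x k : ℂ)) (fun x => (ℰ x l : ℂ)) := by
    rw [hHrdef]
    simp only [pow_zero, Matrix.one_mulVec, pairing]
    push_cast
    exact Finset.sum_congr rfl fun x _ => by ring
  constructor
  · exact summable_norm_iff.mpr HF.summable
  · rw [HF.tsum_eq, star_sub, Complex.star_def, Complex.conj_ofReal, hH0]
    ring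
end

section
/- Let (X_τ)_{τ∈ℤ} be a two-sided stationary Markov chain on {1,…,d} with transition matrix P₀ and marginal law π₀, assumed in the form: for all σ ∈ ℤ, n ≥ 0 and functions f,g : {1,…,d} → ℝ, E[f(X_σ) g(X_{σ+n})] = Σ_x π₀(x) f(x) (P₀ⁿ g)(x). Let ℰ be a d×d real matrix, ε_k(x) = ℰ(x,k), and let m ≥ 1 be an integer. Suppose the autocorrelation of the input process has the form R_ζ(n) = Σ_{j=1}^{n_G} A_j ρ_jⁿ for n ≥ 0, where A_j ∈ ℂ and ρ_j ∈ ℂ with |ρ_j| < 1. Then for every θ ∈ ℝ and all k, l, the two-sided series Σ_{τ∈ℤ} E[ε_k(X_0) ε_l(X_τ)] R_ζ(m|τ|) e^{−iτθ} converges absolutely and equals Σ_{j=1}^{n_G} A_j ( ⟨ε_k, U_{ϱ_j} ε_l⟩ + ⟨ε_l, U_{ϱ_j'} ε_k⟩ − ⟨ε_k, ε_l⟩ ), where ϱ_j = ρ_jᵐ e^{−iθ} and ϱ_j' = ρ_jᵐ e^{iθ}. -/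
open MeasureTheory Matrix

lemma aux_summable_geom {ϱ : ℂ} (hϱ : ‖ϱ‖ < 1) (z : ℕ → ℂ) (C : ℝ)
    (hz : ∀ n, ‖z n‖ ≤ C) : Summable (fun n : ℕ => ϱ ^ n * z n) := by
  apply Summable.of_norm
  apply Summable.of_nonneg_of_le (fun n => norm_nonneg _) (fun n => ?_)
    ((summable_geometric_of_lt_one (norm_nonneg ϱ) (by exact hϱ)).mul_right C)
  rw [norm_mul, norm_pow]
  gcongr
  exact hz n

lemma aux_resolvent_pairing (d : ℕ) (P₀ : Matrix (Fin d) (Fin d) ℝ) (π₀ : Fin d → ℝ)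
    (f g : Fin d → ℝ) (ϱ : ℂ) (hϱ : ‖ϱ‖ < 1) (C : ℝ)
    (hC : ∀ (n : ℕ) (x : Fin d), ‖∑ y, ((P₀ ^ n) x y : ℂ) * (g y : ℂ)‖ ≤ C) :
    pairing d π₀ (fun x => (f x : ℂ)) (resolventApply d P₀ ϱ (fun x => (g x : ℂ)))
      = ∑' n : ℕ, ϱ ^ n * ∑ x, (π₀ x : ℂ) * (f x : ℂ) * ∑ y, ((P₀ ^ n) x y : ℂ) * (g y : ℂ) := by
  have hsumm : ∀ x, Summable (fun n : ℕ => ϱ ^ n * ∑ y, ((P₀ ^ n) x y : ℂ) * (g y : ℂ)) :=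
    fun x => aux_summable_geom hϱ _ C (fun n => hC n x)
  unfold pairing resolventApply
  calc ∑ x, (π₀ x : ℂ) * (f x : ℂ) * ∑' n : ℕ, ϱ ^ n * ∑ y, ((P₀ ^ n) x y : ℂ) * (g y : ℂ)
      = ∑ x, ∑' n : ℕ, (π₀ x : ℂ) * (f x : ℂ) * (ϱ ^ n * ∑ y, ((P₀ ^ n) x y : ℂ) * (g y : ℂ)) := by
        exact Finset.sum_congr rfl fun x _ => (tsum_mul_left).symm
    _ = ∑' n : ℕ, ∑ x, (π₀ x : ℂ) * (f x : ℂ) * (ϱ ^ n * ∑ y, ((P₀ ^ n) x y : ℂ) * (g y : ℂ)) := by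
        exact (Summable.tsum_finsetSum (fun x _ => (hsumm x).mul_left _)).symm
    _ = ∑' n : ℕ, ϱ ^ n * ∑ x, (π₀ x : ℂ) * (f x : ℂ) * ∑ y, ((P₀ ^ n) x y : ℂ) * (g y : ℂ) := by
        refine tsum_congr fun n => ?_
        rw [Finset.mul_sum]
        exact Finset.sum_congr rfl fun x _ => by ring

lemma aux_geomZ {r : ℝ} (h0 : 0 ≤ r) (h1 : r < 1) : Summable (fun τ : ℤ => r ^ τ.natAbs) := by
  apply Summable.of_nat_of_neg
  · simpa using summable_geometric_of_lt_one h0 h1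
  · simpa using summable_geometric_of_lt_one h0 h1

/-- **Extension of Proposition 2.**  When the input autocorrelation is a finite sum of
geometric terms `R_ζ(n) = Σ_j A_j ρ_jⁿ` with `|ρ_j| < 1`, the two-sided series
`Σ_τ E[ε_k(X_0) ε_l(X_τ)] R_ζ(m|τ|) e^{−iτθ}` converges absolutely and equals
`Σ_j A_j (⟨ε_k, U_{ϱ_j} ε_l⟩ + ⟨ε_l, U_{ϱ_j'} ε_k⟩ − ⟨ε_k, ε_l⟩)`, where
`ϱ_j = ρ_jᵐ e^{−iθ}` and `ϱ_j' = ρ_jᵐ e^{iθ}`. -/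
theorem stmt8 {Ω : Type*} {mΩ : MeasurableSpace Ω} (μ : Measure Ω) [IsProbabilityMeasure μ]
    (d : ℕ) (P₀ : Matrix (Fin d) (Fin d) ℝ) (π₀ : Fin d → ℝ)
    (hPnonneg : ∀ x x', 0 ≤ P₀ x x') (hProw : ∀ x, ∑ x', P₀ x x' = 1)
    (hπnonneg : ∀ x, 0 ≤ π₀ x) (hπsum : ∑ x, π₀ x = 1)
    (hπinv : ∀ x', ∑ x, π₀ x * P₀ x x' = π₀ x')
    (X : ℤ → Ω → Fin d) (hXmeas : ∀ τ, Measurable (X τ))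
    (hstat : ∀ (σ : ℤ) (n : ℕ) (f g : Fin d → ℝ),
      ∫ ω, f (X σ ω) * g (X (σ + n) ω) ∂μ = ∑ x, π₀ x * f x * (P₀ ^ n).mulVec g x)
    (ℰ : Matrix (Fin d) (Fin d) ℝ)
    (m : ℕ) (hm : 1 ≤ m)
    (nG : ℕ) (A : Fin nG → ℂ) (ρ : Fin nG → ℂ) (hρ : ∀ j, ‖ρ j‖ < 1)
    (R : ℕ → ℂ) (hR : ∀ n, R n = ∑ j, A j * ρ j ^ n) :
    ∀ (θ : ℝ) (k l : Fin d),
      Summable (fun τ : ℤ =>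
        ‖((∫ ω, ℰ (X 0 ω) k * ℰ (X τ ω) l ∂μ : ℝ) : ℂ) * R (m * τ.natAbs) *
          Complex.exp (-(τ : ℂ) * (θ : ℂ) * Complex.I)‖) ∧
      ∑' τ : ℤ, ((∫ ω, ℰ (X 0 ω) k * ℰ (X τ ω) l ∂μ : ℝ) : ℂ) * R (m * τ.natAbs) *
          Complex.exp (-(τ : ℂ) * (θ : ℂ) * Complex.I) =
        ∑ j, A j *
          (pairing d π₀ (fun x => (ℰ x k : ℂ))
              (resolventApply d P₀ (ρ j ^ m * Complex.exp (-(θ : ℂ) * Complex.I))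
                (fun x => (ℰ x l : ℂ))) +
            pairing d π₀ (fun x => (ℰ x l : ℂ))
              (resolventApply d P₀ (ρ j ^ m * Complex.exp ((θ : ℂ) * Complex.I))
                (fun x => (ℰ x k : ℂ))) -
            pairing d π₀ (fun x => (ℰ x k : ℂ)) (fun x => (ℰ x l : ℂ))) := by
  intro θ k l
  -- powers of P₀ are stochastic
  have hPn : ∀ n : ℕ, (∀ x y, 0 ≤ (P₀ ^ n) x y) ∧ (∀ x, ∑ y, (P₀ ^ n) x y = 1) := by
    intro n
    induction n with
    | zero =>
      refine ⟨fun x y => ?_, fun x => ?_⟩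
      · rw [pow_zero]
        by_cases h : x = y <;> simp [Matrix.one_apply, h]
      · rw [pow_zero]
        simp [Matrix.one_apply]
    | succ n ih =>
      refine ⟨fun x y => ?_, fun x => ?_⟩
      · rw [pow_succ, Matrix.mul_apply]
        exact Finset.sum_nonneg fun j _ => mul_nonneg (ih.1 x j) (hPnonneg j y)
      · rw [pow_succ]
        simp only [Matrix.mul_apply]
        rw [Finset.sum_comm]
        calc ∑ j, ∑ y, (P₀ ^ n) x j * P₀ j y
            = ∑ j, (P₀ ^ n) x j * ∑ y, P₀ j y := by
              exact Finset.sum_congr rfl fun j _ => (Finset.mul_sum _ _ _).symm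
          _ = 1 := by simp [hProw, ih.2 x]
  have hPle : ∀ (n : ℕ) x y, (P₀ ^ n) x y ≤ 1 := fun n x y => by
    rw [← (hPn n).2 x]
    exact Finset.single_le_sum (fun i _ => (hPn n).1 x i) (Finset.mem_univ y)
  have hπle : ∀ x, π₀ x ≤ 1 := fun x => by
    rw [← hπsum]
    exact Finset.single_le_sum (fun i _ => hπnonneg i) (Finset.mem_univ x)
  -- the correlation sequence
  set c : Fin d → Fin d → ℕ → ℝ :=
    fun a b n => ∑ x, π₀ x * ℰ x a * (P₀ ^ n).mulVec (fun y => ℰ y b) x with hcdef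
  have hE : ∀ τ : ℤ, (∫ ω, ℰ (X 0 ω) k * ℰ (X τ ω) l ∂μ) =
      if 0 ≤ τ then c k l τ.natAbs else c l k τ.natAbs := by
    intro τ
    rcases le_or_gt 0 τ with h | h
    · rw [if_pos h]
      obtain ⟨n, rfl⟩ := Int.eq_ofNat_of_zero_le h
      have h0 := hstat 0 n (fun x => ℰ x k) (fun x => ℰ x l)
      rw [zero_add] at h0
      rw [h0, hcdef]
      simp
    · rw [if_neg (not_le.mpr h)]
      have hτ : τ + (τ.natAbs : ℤ) = 0 := by omega
      have h0 := hstat τ τ.natAbs (fun x => ℰ x l) (fun x => ℰ x k)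
      rw [hτ] at h0
      calc ∫ ω, ℰ (X 0 ω) k * ℰ (X τ ω) l ∂μ
          = ∫ ω, ℰ (X τ ω) l * ℰ (X 0 ω) k ∂μ := by simp [mul_comm]
        _ = c l k τ.natAbs := by rw [hcdef]; exact h0
  -- uniform bound on c
  set M : ℝ := (∑ x, |ℰ x k|) * (∑ x, |ℰ x l|) with hMdef
  have hMnonneg : 0 ≤ M := by
    apply mul_nonneg <;> exact Finset.sum_nonneg fun x _ => abs_nonneg _
  have hcb : ∀ (a b : Fin d) (n : ℕ), |c a b n| ≤ (∑ x, |ℰ x a|) * (∑ x, |ℰ x b|) := by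
    intro a b n
    rw [hcdef]
    calc |∑ x, π₀ x * ℰ x a * (P₀ ^ n).mulVec (fun y => ℰ y b) x|
        ≤ ∑ x, |π₀ x * ℰ x a * (P₀ ^ n).mulVec (fun y => ℰ y b) x| :=
          Finset.abs_sum_le_sum_abs _ _
      _ ≤ ∑ x, |ℰ x a| * (∑ y, |ℰ y b|) := by
          refine Finset.sum_le_sum fun x _ => ?_
          rw [abs_mul, abs_mul]
          have h1 : |π₀ x| ≤ 1 := by
            rw [abs_of_nonneg (hπnonneg x)]; exact hπle x
          have h2 : |(P₀ ^ n).mulVec (fun y => ℰ y b) x| ≤ ∑ y, |ℰ y b| := by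
            simp only [Matrix.mulVec, dotProduct]
            calc |∑ y, (P₀ ^ n) x y * ℰ y b| ≤ ∑ y, |(P₀ ^ n) x y * ℰ y b| :=
                  Finset.abs_sum_le_sum_abs _ _
              _ ≤ ∑ y, |ℰ y b| := by
                  refine Finset.sum_le_sum fun y _ => ?_
                  rw [abs_mul, abs_of_nonneg ((hPn n).1 x y)]
                  exact mul_le_of_le_one_left (abs_nonneg _) (hPle n x y)
          calc |π₀ x| * |ℰ x a| * |(P₀ ^ n).mulVec (fun y => ℰ y b) x|
              ≤ 1 * |ℰ x a| * (∑ y, |ℰ y b|) := by gcongr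
            _ = |ℰ x a| * (∑ y, |ℰ y b|) := by rw [one_mul]
      _ = (∑ x, |ℰ x a|) * (∑ x, |ℰ x b|) := by rw [← Finset.sum_mul]
  have hcM : ∀ (n : ℕ), |c k l n| ≤ M ∧ |c l k n| ≤ M := fun n =>
    ⟨hcb k l n, by rw [hMdef, mul_comm]; exact hcb l k n⟩
  -- norm of the exponential factor
  have hexp1 : ∀ τ : ℤ, ‖Complex.exp (-(τ : ℂ) * (θ : ℂ) * Complex.I)‖ = 1 := by
    intro τ
    rw [Complex.norm_exp]
    norm_num [Complex.mul_re]
  -- bound on R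
  have hRb : ∀ t : ℕ, ‖R (m * t)‖ ≤ ∑ j, ‖A j‖ * (‖ρ j‖ ^ m) ^ t := by
    intro t
    rw [hR]
    calc ‖∑ j, A j * ρ j ^ (m * t)‖ ≤ ∑ j, ‖A j * ρ j ^ (m * t)‖ := norm_sum_le _ _
      _ = ∑ j, ‖A j‖ * (‖ρ j‖ ^ m) ^ t := by
          refine Finset.sum_congr rfl fun j _ => ?_
          rw [norm_mul, norm_pow, ← pow_mul]
  -- absolute values of the resolvent arguments
  have habsρm : ∀ j : Fin nG, ‖ρ j‖ ^ m < 1 := fun j =>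
    pow_lt_one₀ (norm_nonneg _) (hρ j) (by omega)
  have habsϱ : ∀ (j : Fin nG) (w : ℂ), w.re = 0 →
      ‖ρ j ^ m * Complex.exp w‖ < 1 := by
    intro j w hw
    rw [norm_mul, norm_pow, Complex.norm_exp, hw, Real.exp_zero, mul_one]
    exact habsρm j
  -- the per-j summand over ℤ
  set h : Fin nG → ℤ → ℂ := fun j τ =>
    ((if 0 ≤ τ then c k l τ.natAbs else c l k τ.natAbs : ℝ) : ℂ) *
      ((ρ j ^ m) ^ τ.natAbs * Complex.exp (-(τ : ℂ) * (θ : ℂ) * Complex.I)) with hhdef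
  have hhnorm : ∀ (j : Fin nG) (τ : ℤ), ‖h j τ‖ ≤ M * (‖ρ j‖ ^ m) ^ τ.natAbs := by
    intro j τ
    rw [hhdef]
    simp only []
    rw [norm_mul, norm_mul, hexp1, mul_one, norm_pow, Complex.norm_real,
      Real.norm_eq_abs, norm_pow]
    have h1 : |if 0 ≤ τ then c k l τ.natAbs else c l k τ.natAbs| ≤ M := by
      split
      · exact (hcM _).1
      · exact (hcM _).2
    gcongr
  have hgeom : ∀ j : Fin nG, Summable (fun τ : ℤ => M * (‖ρ j‖ ^ m) ^ τ.natAbs) :=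
    fun j => (aux_geomZ (r := ‖ρ j‖ ^ m) (by positivity) (habsρm j)).mul_left M
  have hhsummable : ∀ j : Fin nG, Summable (h j) := by
    intro j
    apply Summable.of_norm
    exact Summable.of_nonneg_of_le (fun τ => norm_nonneg _) (hhnorm j) (hgeom j)
  -- rewrite the summand
  have heq : ∀ τ : ℤ,
      ((∫ ω, ℰ (X 0 ω) k * ℰ (X τ ω) l ∂μ : ℝ) : ℂ) * R (m * τ.natAbs) *
        Complex.exp (-(τ : ℂ) * (θ : ℂ) * Complex.I) = ∑ j, A j * h j τ := by
    intro τ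
    rw [hE τ, hR]
    rw [Finset.mul_sum, Finset.sum_mul]
    refine Finset.sum_congr rfl fun j _ => ?_
    rw [hhdef]
    simp only []
    rw [pow_mul]
    ring
  -- the norm bound for the original summand
  have hFb : ∀ τ : ℤ,
      ‖((∫ ω, ℰ (X 0 ω) k * ℰ (X τ ω) l ∂μ : ℝ) : ℂ) * R (m * τ.natAbs) *
        Complex.exp (-(τ : ℂ) * (θ : ℂ) * Complex.I)‖ ≤
      ∑ j, ‖A j‖ * M * (‖ρ j‖ ^ m) ^ τ.natAbs := by
    intro τ
    rw [heq τ]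
    calc ‖∑ j, A j * h j τ‖ ≤ ∑ j, ‖A j * h j τ‖ := norm_sum_le _ _
      _ ≤ ∑ j, ‖A j‖ * M * (‖ρ j‖ ^ m) ^ τ.natAbs := by
          refine Finset.sum_le_sum fun j _ => ?_
          rw [norm_mul, mul_assoc]
          exact mul_le_mul_of_nonneg_left (hhnorm j τ) (norm_nonneg _)
  have hGsummable : Summable (fun τ : ℤ =>
      ∑ j, ‖A j‖ * M * (‖ρ j‖ ^ m) ^ τ.natAbs) := by
    apply summable_sum
    intro j _
    exact (aux_geomZ (r := ‖ρ j‖ ^ m) (by positivity) (habsρm j)).mul_left _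
  have hSumm : Summable (fun τ : ℤ =>
      ‖((∫ ω, ℰ (X 0 ω) k * ℰ (X τ ω) l ∂μ : ℝ) : ℂ) * R (m * τ.natAbs) *
        Complex.exp (-(τ : ℂ) * (θ : ℂ) * Complex.I)‖) :=
    Summable.of_nonneg_of_le (fun τ => norm_nonneg _) hFb hGsummable
  refine ⟨hSumm, ?_⟩
  -- casting c to ℂ
  have hcast : ∀ (a b : Fin d) (n : ℕ), ((c a b n : ℝ) : ℂ) =
      ∑ x, (π₀ x : ℂ) * (ℰ x a : ℂ) * ∑ y, ((P₀ ^ n) x y : ℂ) * (ℰ y b : ℂ) := by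
    intro a b n
    rw [hcdef]
    simp only [Matrix.mulVec, dotProduct]
    push_cast
    rfl
  -- bound used for the resolvent lemma
  have hCb : ∀ (b : Fin d) (n : ℕ) (x : Fin d),
      ‖∑ y, ((P₀ ^ n) x y : ℂ) * (ℰ y b : ℂ)‖ ≤ ∑ y, |ℰ y b| := by
    intro b n x
    calc ‖∑ y, ((P₀ ^ n) x y : ℂ) * (ℰ y b : ℂ)‖
        ≤ ∑ y, ‖((P₀ ^ n) x y : ℂ) * (ℰ y b : ℂ)‖ := norm_sum_le _ _
      _ ≤ ∑ y, |ℰ y b| := by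
          refine Finset.sum_le_sum fun y _ => ?_
          rw [norm_mul, Complex.norm_real, Real.norm_eq_abs, Complex.norm_real,
            Real.norm_eq_abs, abs_of_nonneg ((hPn n).1 x y)]
          exact mul_le_of_le_one_left (abs_nonneg _) (hPle n x y)
  -- bound on (c : ℂ)
  have hcnorm : ∀ (a b : Fin d) (n : ℕ), ‖((c a b n : ℝ) : ℂ)‖ ≤
      (∑ x, |ℰ x a|) * (∑ x, |ℰ x b|) := by
    intro a b n
    rw [Complex.norm_real, Real.norm_eq_abs]
    exact hcb a b n
  -- value of each one-sided sum
  have hval : ∀ j : Fin nG, ∑' τ : ℤ, h j τ =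
      pairing d π₀ (fun x => (ℰ x k : ℂ))
        (resolventApply d P₀ (ρ j ^ m * Complex.exp (-(θ : ℂ) * Complex.I))
          (fun x => (ℰ x l : ℂ))) +
      pairing d π₀ (fun x => (ℰ x l : ℂ))
        (resolventApply d P₀ (ρ j ^ m * Complex.exp ((θ : ℂ) * Complex.I))
          (fun x => (ℰ x k : ℂ))) -
      pairing d π₀ (fun x => (ℰ x k : ℂ)) (fun x => (ℰ x l : ℂ)) := by
    intro j
    set ϱ₁ : ℂ := ρ j ^ m * Complex.exp (-(θ : ℂ) * Complex.I) with hϱ₁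
    set ϱ₂ : ℂ := ρ j ^ m * Complex.exp ((θ : ℂ) * Complex.I) with hϱ₂
    have habs₁ : ‖ϱ₁‖ < 1 := habsϱ j _ (by simp)
    have habs₂ : ‖ϱ₂‖ < 1 := habsϱ j _ (by simp)
    -- positive part
    have hpos : ∀ n : ℕ, h j (n : ℤ) = ϱ₁ ^ n * ((c k l n : ℝ) : ℂ) := by
      intro n
      rw [hhdef]
      simp only [Int.natAbs_natCast]
      rw [if_pos (Int.natCast_nonneg n)]
      have harg : (-((n : ℤ) : ℂ) * (θ : ℂ) * Complex.I) = (n : ℂ) * (-(θ : ℂ) * Complex.I) := by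
        push_cast; ring
      rw [harg, Complex.exp_nat_mul, hϱ₁, mul_pow]
      ring
    -- negative part
    have hneg : ∀ n : ℕ, h j (-((n : ℤ) + 1)) = ϱ₂ ^ (n + 1) * ((c l k (n + 1) : ℝ) : ℂ) := by
      intro n
      rw [hhdef]
      have hna : (-((n : ℤ) + 1)).natAbs = n + 1 := by omega
      simp only [hna]
      rw [if_neg (by omega)]
      have harg : (-((-((n : ℤ) + 1) : ℤ) : ℂ) * (θ : ℂ) * Complex.I)
          = ((n + 1 : ℕ) : ℂ) * ((θ : ℂ) * Complex.I) := by
        push_cast; ring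
      rw [harg, Complex.exp_nat_mul, hϱ₂, mul_pow]
      ring
    have hsum₁ : Summable (fun n : ℕ => ϱ₁ ^ n * ((c k l n : ℝ) : ℂ)) :=
      aux_summable_geom habs₁ _ _ (fun n => hcnorm k l n)
    have hsum₂ : Summable (fun n : ℕ => ϱ₂ ^ n * ((c l k n : ℝ) : ℂ)) :=
      aux_summable_geom habs₂ _ _ (fun n => hcnorm l k n)
    have hs1 : Summable (fun n : ℕ => h j (n : ℤ)) := (summable_congr hpos).mpr hsum₁
    have hs2 : Summable (fun n : ℕ => h j (-((n : ℤ) + 1))) :=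
      (summable_congr hneg).mpr ((summable_nat_add_iff (f := fun n : ℕ => ϱ₂ ^ n * ((c l k n : ℝ) : ℂ)) 1).2 hsum₂)
    rw [tsum_of_nat_of_neg_add_one hs1 hs2]
    -- identify the two parts
    have hpart₁ : ∑' n : ℕ, h j (n : ℤ) =
        pairing d π₀ (fun x => (ℰ x k : ℂ)) (resolventApply d P₀ ϱ₁ (fun x => (ℰ x l : ℂ))) := by
      rw [aux_resolvent_pairing d P₀ π₀ (fun x => ℰ x k) (fun x => ℰ x l) ϱ₁ habs₁
        (∑ y, |ℰ y l|) (fun n x => hCb l n x)]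
      refine tsum_congr fun n => ?_
      rw [hpos n, hcast]
    have hpart₂ : ∑' n : ℕ, h j (-((n : ℤ) + 1)) =
        pairing d π₀ (fun x => (ℰ x l : ℂ)) (resolventApply d P₀ ϱ₂ (fun x => (ℰ x k : ℂ)))
          - ((c l k 0 : ℝ) : ℂ) := by
      have hfull : ∑' n : ℕ, ϱ₂ ^ n * ((c l k n : ℝ) : ℂ) =
          pairing d π₀ (fun x => (ℰ x l : ℂ)) (resolventApply d P₀ ϱ₂ (fun x => (ℰ x k : ℂ))) := by
        rw [aux_resolvent_pairing d P₀ π₀ (fun x => ℰ x l) (fun x => ℰ x k) ϱ₂ habs₂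
          (∑ y, |ℰ y k|) (fun n x => hCb k n x)]
        exact tsum_congr fun n => by rw [hcast]
      have hzero := Summable.tsum_eq_zero_add hsum₂
      rw [tsum_congr hneg, ← hfull, hzero]
      simp [pow_zero]
    have hc0 : ((c l k 0 : ℝ) : ℂ) =
        pairing d π₀ (fun x => (ℰ x k : ℂ)) (fun x => (ℰ x l : ℂ)) := by
      rw [hcast]
      unfold pairing
      refine Finset.sum_congr rfl fun x _ => ?_
      rw [pow_zero]
      have : ∑ y, ((1 : Matrix (Fin d) (Fin d) ℝ) x y : ℂ) * (ℰ y k : ℂ) = (ℰ x k : ℂ) := by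
        rw [Finset.sum_eq_single x]
        · simp [Matrix.one_apply]
        · intro y _ hy
          simp [Matrix.one_apply, Ne.symm hy]
        · intro hx; exact absurd (Finset.mem_univ x) hx
      rw [this]
      ring
    rw [hpart₁, hpart₂, hc0]
    ring
  -- final assembly
  calc ∑' τ : ℤ, ((∫ ω, ℰ (X 0 ω) k * ℰ (X τ ω) l ∂μ : ℝ) : ℂ) * R (m * τ.natAbs) *
        Complex.exp (-(τ : ℂ) * (θ : ℂ) * Complex.I)
      = ∑' τ : ℤ, ∑ j, A j * h j τ := tsum_congr heq
    _ = ∑ j, ∑' τ : ℤ, A j * h j τ := Summable.tsum_finsetSum (fun j _ => (hhsummable j).mul_left _)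
    _ = ∑ j, A j * ∑' τ : ℤ, h j τ := Finset.sum_congr rfl fun j _ => tsum_mul_left
    _ = _ := Finset.sum_congr rfl fun j _ => by rw [hval j]
end
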